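/- Let a > b > 0 be real constants, μ ∈ ℝ \ {a, b}, and let (x, y) ∈ ℝ² be a point of the conic C_μ : x²/(a−μ) + y²/(b−μ) = 1. Let n = (x/(a−μ), y/(b−μ)) be the normal vector to C_μ at (x, y) (note n ≠ 0), and for a velocity v = (ẋ, ẏ) ∈ ℝ² let v' = v − 2(⟨v, n⟩/⟨n, n⟩)·n be the billiard reflection of v off C_μ at (x, y). Then for every λ ∈ ℝ \ {a, b}, K_λ(x, y, v') = K_λ(x, y, v). Consequently each K_λ is a first integral of the billiard motion in any domain whose boundary is composed of arcs of conics confocal with the family C_λ. -/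

import Mathlib

/-- The function `K_λ` associated with the confocal family with parameters `a > b > 0`. -/
noncomputable def Kfun (a b lam : ℝ) (x y vx vy : ℝ) : ℝ :=
  vx ^ 2 / (a - lam) + vy ^ 2 / (b - lam) - (vx * y - vy * x) ^ 2 / ((a - lam) * (b - lam))

/-- The billiard reflection of a velocity `v` off the conic `C_μ` at the point `(x, y)`:
the component of `v` along the normal `n = (x/(a−μ), y/(b−μ))` is reversed. -/
noncomputable def billiardReflect (a b mu : ℝ) (x y : ℝ) (v : ℝ × ℝ) : ℝ × ℝ :=
  let n : ℝ × ℝ := (x / (a - mu), y / (b - mu))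
  v - (2 * ((v.1 * n.1 + v.2 * n.2) / (n.1 * n.1 + n.2 * n.2))) • n

/-- Key algebraic identity: the (cleared-denominator) bilinear form of `K_λ` satisfies
`Bil(v,n) * |n|² = ⟨v,n⟩ * Bil(n,n)` given the conic relations. -/
lemma key_identity (e n1 n2 x y v1 v2 P : ℝ)
    (h1 : x * n1 + y * n2 = 1) (h2 : n1 * y - n2 * x = e * (n1 * n2)) :
    (v1 * n1 * (P + e) + v2 * n2 * P - (v1 * y - v2 * x) * (n1 * y - n2 * x)) *
        (n1 * n1 + n2 * n2) =
      (v1 * n1 + v2 * n2) *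
        (n1 * n1 * (P + e) + n2 * n2 * P - (n1 * y - n2 * x) ^ 2) := by
  linear_combination (v2 * n1 - v1 * n2) * h2 +
    (v2 * n1 - v1 * n2) * (n1 * y - n2 * x) * h1

set_option maxHeartbeats 1000000 in
set_option maxRecDepth 8000 in
theorem K_invariant_under_reflection
    (a b : ℝ) (hab : a > b) (hb : b > 0)
    (mu : ℝ) (hmua : mu ≠ a) (hmub : mu ≠ b)
    (x y : ℝ) (hconic : x ^ 2 / (a - mu) + y ^ 2 / (b - mu) = 1)
    (v : ℝ × ℝ) :
    ∀ lam : ℝ, lam ≠ a → lam ≠ b →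
      Kfun a b lam x y (billiardReflect a b mu x y v).1 (billiardReflect a b mu x y v).2 =
        Kfun a b lam x y v.1 v.2 := by
  intro lam hla hlb
  have hA : a - mu ≠ 0 := sub_ne_zero_of_ne (Ne.symm hmua)
  have hB : b - mu ≠ 0 := sub_ne_zero_of_ne (Ne.symm hmub)
  have hP : a - lam ≠ 0 := sub_ne_zero_of_ne (Ne.symm hla)
  have hQ : b - lam ≠ 0 := sub_ne_zero_of_ne (Ne.symm hlb)
  set n1 : ℝ := x / (a - mu) with hn1
  set n2 : ℝ := y / (b - mu) with hn2
  have h1 : x * n1 + y * n2 = 1 := by rw [← hconic, hn1, hn2]; ring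
  have h2 : n1 * y - n2 * x = (b - a) * (n1 * n2) := by
    rw [hn1, hn2]; field_simp; ring
  have hD : n1 * n1 + n2 * n2 ≠ 0 := by
    intro h
    have hz1 : n1 = 0 := by nlinarith [sq_nonneg n1, sq_nonneg n2]
    have hz2 : n2 = 0 := by nlinarith [sq_nonneg n1, sq_nonneg n2]
    rw [hz1, hz2] at h1; simp at h1
  simp only [billiardReflect, Kfun, Prod.fst_sub, Prod.snd_sub, Prod.smul_fst,
    Prod.smul_snd, smul_eq_mul]
  set c : ℝ := 2 * ((v.1 * n1 + v.2 * n2) / (n1 * n1 + n2 * n2)) with hcdef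
  have hc : c * (n1 * n1 + n2 * n2) = 2 * (v.1 * n1 + v.2 * n2) := by
    rw [hcdef]; field_simp; exact mul_div_cancel_right₀ _ (by simpa [sq] using hD)
  have hkey := key_identity (b - a) n1 n2 x y v.1 v.2 (a - lam) h1 h2
  have hQP : (a - lam) + (b - a) = b - lam := by ring
  rw [hQP] at hkey
  -- main: 2c·Bil'(v,n) = c²·Bil'(n,n)
  have main : (2 * c) * (v.1 * n1 * (b - lam) + v.2 * n2 * (a - lam) -
        (v.1 * y - v.2 * x) * (n1 * y - n2 * x)) =
      c ^ 2 * (n1 * n1 * (b - lam) + n2 * n2 * (a - lam) - (n1 * y - n2 * x) ^ 2) := by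
    apply mul_left_cancel₀ hD
    linear_combination (2 * c) * hkey -
      (c * (n1 * n1 * (b - lam) + n2 * n2 * (a - lam) - (n1 * y - n2 * x) ^ 2)) * hc
  have rewr : ∀ u w : ℝ, u ^ 2 / (a - lam) + w ^ 2 / (b - lam) -
      (u * y - w * x) ^ 2 / ((a - lam) * (b - lam)) =
      (u ^ 2 * (b - lam) + w ^ 2 * (a - lam) - (u * y - w * x) ^ 2) /
        ((a - lam) * (b - lam)) := by
    intro u w
    field_simp
  rw [rewr, rewr]
  apply congrArg (· / ((a - lam) * (b - lam)))
  linear_combination - main
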